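/- The distribution of N* = ∑_{j=1}^M N_j, where M ~ TGeometric(ρ) and N_j are i.i.d. with probability function f_N on {1,2,...} independent of M, satisfies the recursion: f_{N*}(1) = ρ·f_N(1), and f_{N*}(k) = (1-ρ)·∑_{i=1}^{k-1} f_N(i)·f_{N*}(k-i) + ρ·f_N(k) for k ≥ 2. -/

import Mathlib

set_option maxHeartbeats 1000000


open MeasureTheory ProbabilityTheory

/-- The distribution of `N* = ∑_{j=1}^M N_j`, where `M ~ TGeometric ρ` and the `N_j`
are i.i.d. with probability function `f` on `{1,2,...}` independent of `M`, satisfies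
`f_{N*}(1) = ρ f(1)` and
`f_{N*}(k) = (1-ρ) ∑_{i=1}^{k-1} f(i) f_{N*}(k-i) + ρ f(k)` for `k ≥ 2`. -/
theorem Nstar_pmf_recursion
    {Ω : Type*} [MeasureSpace Ω] [IsProbabilityMeasure (ℙ : Measure Ω)]
    (ρ : ℝ) (hρ0 : 0 < ρ) (hρ1 : ρ < 1)
    (f : ℕ → ℝ) (hf0 : f 0 = 0) (hf : ∀ k, 0 ≤ f k) (hfsum : ∑' k : ℕ, f k = 1)
    (M : Ω → ℕ) (N : ℕ → Ω → ℕ)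
    (hMmeas : Measurable M) (hNmeas : ∀ j, Measurable (N j))
    (hM : ∀ m, 1 ≤ m → (ℙ {ω | M ω = m}).toReal = ρ * (1 - ρ) ^ (m - 1))
    (hM0 : ℙ {ω | M ω = 0} = 0)
    (hN : ∀ j k, (ℙ {ω | N j ω = k}).toReal = f k)
    (hNindep : iIndepFun N ℙ)
    (hMN : IndepFun M (fun ω j => N j ω) ℙ) :
    (ℙ {ω | ∑ j ∈ Finset.range (M ω), N j ω = 1}).toReal = ρ * f 1 ∧
      ∀ k, 2 ≤ k →
        (ℙ {ω | ∑ j ∈ Finset.range (M ω), N j ω = k}).toReal =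
          (1 - ρ) * ∑ i ∈ Finset.Ico 1 k,
              f i * (ℙ {ω | ∑ j ∈ Finset.range (M ω), N j ω = k - i}).toReal
            + ρ * f k := by
  classical
  have hSmeas : ∀ m, Measurable (fun ω => ∑ j ∈ Finset.range m, N j ω) :=
    fun m => Finset.measurable_sum _ (fun j _ => hNmeas j)
  have hNval : ∀ j k, ℙ {ω | N j ω = k} = ENNReal.ofReal (f k) := by
    intro j k
    rw [← hN j k, ENNReal.ofReal_toReal (measure_ne_top _ _)]
  have hMval : ∀ m, ℙ {ω | M ω = m + 1} = ENNReal.ofReal (ρ * (1 - ρ) ^ m) := by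
    intro m
    have h := hM (m + 1) (by omega)
    simp only [Nat.add_sub_cancel] at h
    rw [← h, ENNReal.ofReal_toReal (measure_ne_top _ _)]
  -- sum of m of the N's is at least m a.s.
  have hq0 : ∀ m k, k < m → ℙ {ω | ∑ j ∈ Finset.range m, N j ω = k} = 0 := by
    intro m k hkm
    have hsub : {ω | ∑ j ∈ Finset.range m, N j ω = k} ⊆
        ⋃ j ∈ Finset.range m, {ω | N j ω = 0} := by
      intro ω hω
      simp only [Set.mem_setOf_eq] at hω
      by_contra h
      simp only [Set.mem_iUnion, Finset.mem_range, Set.mem_setOf_eq, not_exists] at h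
      have hge : m ≤ ∑ j ∈ Finset.range m, N j ω := by
        calc m = ∑ _j ∈ Finset.range m, 1 := by simp
        _ ≤ ∑ j ∈ Finset.range m, N j ω := by
          refine Finset.sum_le_sum fun j hj => ?_
          have := h j
          have hj' := Finset.mem_range.mp hj
          omega
      omega
    refine measure_mono_null hsub ?_
    refine measure_biUnion_null_iff (Finset.countable_toSet _) |>.mpr fun j _ => ?_
    rw [hNval j 0, hf0, ENNReal.ofReal_zero]
  -- law of total probability
  have key : ∀ k, ℙ {ω | ∑ j ∈ Finset.range (M ω), N j ω = k}
      = ∑' m, ℙ {ω | M ω = m} * ℙ {ω | ∑ j ∈ Finset.range m, N j ω = k} := by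
    intro k
    have hset : {ω | ∑ j ∈ Finset.range (M ω), N j ω = k}
        = ⋃ m, (M ⁻¹' {m} ∩ (fun ω => ∑ j ∈ Finset.range m, N j ω) ⁻¹' {k}) := by
      ext ω
      simp only [Set.mem_setOf_eq, Set.mem_iUnion, Set.mem_inter_iff, Set.mem_preimage,
        Set.mem_singleton_iff]
      constructor
      · intro h; exact ⟨M ω, rfl, h⟩
      · rintro ⟨m, rfl, h⟩; exact h
    rw [hset, measure_iUnion]
    · refine tsum_congr fun m => ?_
      have hφ : Measurable (fun v : ℕ → ℕ => ∑ j ∈ Finset.range m, v j) :=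
        Finset.measurable_sum _ (fun j _ => measurable_pi_apply j)
      have hind : IndepFun M (fun ω => ∑ j ∈ Finset.range m, N j ω) ℙ :=
        hMN.comp measurable_id hφ
      exact hind.measure_inter_preimage_eq_mul _ _ (measurableSet_singleton m)
        (measurableSet_singleton k)
    · intro a b hab
      simp only [Function.onFun, Set.disjoint_left]
      rintro ω ⟨ha, -⟩ ⟨hb, -⟩
      exact hab (ha.symm.trans hb)
    · intro m
      exact (hMmeas (measurableSet_singleton m)).inter
        ((hSmeas m) (measurableSet_singleton k))
  -- drop the m = 0 term
  have key' : ∀ k, ℙ {ω | ∑ j ∈ Finset.range (M ω), N j ω = k}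
      = ∑' m, ℙ {ω | M ω = m + 1} * ℙ {ω | ∑ j ∈ Finset.range (m + 1), N j ω = k} := by
    intro k
    rw [key k, tsum_eq_zero_add' ENNReal.summable, hM0, zero_mul, zero_add]
  -- the compound sum is never 0
  have g0 : ℙ {ω | ∑ j ∈ Finset.range (M ω), N j ω = 0} = 0 := by
    rw [key' 0]
    convert tsum_zero with m
    rw [hq0 (m + 1) 0 (by omega), mul_zero]
  -- convolution step
  have hconv : ∀ m k, ℙ {ω | ∑ j ∈ Finset.range (m + 1), N j ω = k}
      = ∑ i ∈ Finset.range (k + 1),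
          ENNReal.ofReal (f i) * ℙ {ω | ∑ j ∈ Finset.range m, N j ω = k - i} := by
    intro m k
    have hset : {ω | ∑ j ∈ Finset.range (m + 1), N j ω = k}
        = ⋃ i ∈ Finset.range (k + 1),
            ((fun ω => ∑ j ∈ Finset.range m, N j ω) ⁻¹' {k - i} ∩ (N m) ⁻¹' {i}) := by
      ext ω
      simp only [Set.mem_setOf_eq, Set.mem_iUnion, Finset.mem_range, Set.mem_inter_iff,
        Set.mem_preimage, Set.mem_singleton_iff]
      rw [Finset.sum_range_succ]
      constructor
      · intro h; exact ⟨N m ω, by omega, by omega, rfl⟩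
      · rintro ⟨i, hik, h1, rfl⟩; omega
    rw [hset, measure_biUnion_finset]
    · refine Finset.sum_congr rfl fun i _ => ?_
      have h := hNindep.indepFun_finset_sum_of_notMem hNmeas
        (Finset.notMem_range_self (n := m))
      have he : (∑ j ∈ Finset.range m, N j) = fun ω => ∑ j ∈ Finset.range m, N j ω := by
        funext ω; exact Finset.sum_apply ω _ _
      rw [he] at h
      rw [h.measure_inter_preimage_eq_mul _ _ (measurableSet_singleton _)
        (measurableSet_singleton _)]
      have : (N m) ⁻¹' {i} = {ω | N m ω = i} := rfl
      rw [this, hNval m i, mul_comm]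
      rfl
    · intro a _ b _ hab
      simp only [Set.disjoint_left]
      rintro ω ⟨-, ha⟩ ⟨-, hb⟩
      exact hab (ha.symm.trans hb)
    · intro i _
      exact ((hSmeas m) (measurableSet_singleton _)).inter
        ((hNmeas m) (measurableSet_singleton i))
  -- first claim, in ENNReal
  have h1 : ℙ {ω | ∑ j ∈ Finset.range (M ω), N j ω = 1}
      = ENNReal.ofReal ρ * ENNReal.ofReal (f 1) := by
    rw [key' 1, tsum_eq_zero_add' ENNReal.summable]
    have hz : ∀ m : ℕ, ℙ {ω | M ω = m + 1 + 1} *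
        ℙ {ω | ∑ j ∈ Finset.range (m + 1 + 1), N j ω = 1} = 0 := by
      intro m
      rw [hq0 (m + 2) 1 (by omega), mul_zero]
    rw [tsum_congr hz, tsum_zero, add_zero, hMval 0]
    have : {ω | ∑ j ∈ Finset.range (0 + 1), N j ω = 1} = {ω | N 0 ω = 1} := by
      ext ω; simp
    rw [this, hNval 0 1]
    simp
  constructor
  · rw [h1, ENNReal.toReal_mul, ENNReal.toReal_ofReal hρ0.le, ENNReal.toReal_ofReal (hf 1)]
  · intro k hk
    -- recursion in ENNReal
    have hrec : ℙ {ω | ∑ j ∈ Finset.range (M ω), N j ω = k}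
        = ENNReal.ofReal (1 - ρ) * ∑ i ∈ Finset.Ico 1 k,
            ENNReal.ofReal (f i) * ℙ {ω | ∑ j ∈ Finset.range (M ω), N j ω = k - i}
          + ENNReal.ofReal ρ * ENNReal.ofReal (f k) := by
      rw [key' k, tsum_eq_zero_add' ENNReal.summable]
      have hstep : ∀ m : ℕ, ℙ {ω | M ω = m + 1 + 1} *
          ℙ {ω | ∑ j ∈ Finset.range (m + 1 + 1), N j ω = k}
          = ∑ i ∈ Finset.range (k + 1), ENNReal.ofReal (f i) *
              (ENNReal.ofReal (1 - ρ) * (ℙ {ω | M ω = m + 1} *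
                ℙ {ω | ∑ j ∈ Finset.range (m + 1), N j ω = k - i})) := by
        intro m
        rw [hconv (m + 1) k, Finset.mul_sum]
        refine Finset.sum_congr rfl fun i _ => ?_
        rw [hMval (m + 1), hMval m]
        rw [show ρ * (1 - ρ) ^ (m + 1) = (1 - ρ) * (ρ * (1 - ρ) ^ m) by ring,
          ENNReal.ofReal_mul (by linarith)]
        ring
      rw [tsum_congr hstep]
      rw [Summable.tsum_finsetSum (fun i _ => ENNReal.summable)]
      have hswap : ∀ i ∈ Finset.range (k + 1),
          (∑' m : ℕ, ENNReal.ofReal (f i) * (ENNReal.ofReal (1 - ρ) *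
            (ℙ {ω | M ω = m + 1} * ℙ {ω | ∑ j ∈ Finset.range (m + 1), N j ω = k - i})))
          = ENNReal.ofReal (1 - ρ) * (ENNReal.ofReal (f i) *
              ℙ {ω | ∑ j ∈ Finset.range (M ω), N j ω = k - i}) := by
        intro i _
        rw [ENNReal.tsum_mul_left, ENNReal.tsum_mul_left, ← key' (k - i)]
        ring
      rw [Finset.sum_congr rfl hswap, ← Finset.mul_sum]
      have hrestrict : ∑ i ∈ Finset.range (k + 1),
          ENNReal.ofReal (f i) * ℙ {ω | ∑ j ∈ Finset.range (M ω), N j ω = k - i}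
          = ∑ i ∈ Finset.Ico 1 k,
              ENNReal.ofReal (f i) * ℙ {ω | ∑ j ∈ Finset.range (M ω), N j ω = k - i} := by
        refine (Finset.sum_subset ?_ ?_).symm
        · intro i hi
          simp only [Finset.mem_Ico] at hi
          exact Finset.mem_range.mpr (by omega)
        · intro i hi hni
          simp only [Finset.mem_range] at hi
          simp only [Finset.mem_Ico, not_and, not_lt] at hni
          rcases Nat.eq_zero_or_pos i with h0 | h0
          · subst h0; rw [hf0, ENNReal.ofReal_zero, zero_mul]
          · have hik : i = k := by omega
            subst hik
            rw [Nat.sub_self, g0, mul_zero]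
      rw [hrestrict, hMval 0]
      have hq1 : ℙ {ω | ∑ j ∈ Finset.range (0 + 1), N j ω = k} = ENNReal.ofReal (f k) := by
        have : {ω | ∑ j ∈ Finset.range (0 + 1), N j ω = k} = {ω | N 0 ω = k} := by
          ext ω; simp
        rw [this, hNval 0 k]
      rw [hq1]
      rw [pow_zero, mul_one, add_comm]
    -- pass to real numbers
    have hfin : ∀ i ∈ Finset.Ico 1 k,
        ENNReal.ofReal (f i) * ℙ {ω | ∑ j ∈ Finset.range (M ω), N j ω = k - i} ≠ ⊤ :=
      fun i _ => ENNReal.mul_ne_top ENNReal.ofReal_ne_top (measure_ne_top _ _)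
    have hsumfin : (∑ i ∈ Finset.Ico 1 k,
        ENNReal.ofReal (f i) * ℙ {ω | ∑ j ∈ Finset.range (M ω), N j ω = k - i}) ≠ ⊤ := by
      exact (ENNReal.sum_lt_top.mpr fun i hi => (hfin i hi).lt_top).ne
    rw [hrec, ENNReal.toReal_add
        (ENNReal.mul_ne_top ENNReal.ofReal_ne_top hsumfin)
        (ENNReal.mul_ne_top ENNReal.ofReal_ne_top ENNReal.ofReal_ne_top),
      ENNReal.toReal_mul, ENNReal.toReal_mul,
      ENNReal.toReal_ofReal (by linarith : (0:ℝ) ≤ 1 - ρ),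
      ENNReal.toReal_ofReal hρ0.le, ENNReal.toReal_ofReal (hf k),
      ENNReal.toReal_sum hfin]
    congr 1
    refine congrArg _ (Finset.sum_congr rfl fun i _ => ?_)
    rw [ENNReal.toReal_mul, ENNReal.toReal_ofReal (hf i)]
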